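/- Let x : ℤ → Σ be a recurrent bi-infinite sequence and suppose a word v of length N occurs at position s in x. Then for every positive integer q, v occurs in x at infinitely many positions congruent to s modulo q. -/

import Mathlib

/-- In a recurrent sequence, a word `v` occurring at position `s` occurs at
infinitely many positions congruent to `s` modulo `q`. -/
theorem stmt_2 {A : Type*} [Fintype A] (x : ℤ → A)
    (hrec : ∀ (s : ℤ) (N : ℕ) (M : ℤ), ∃ p : ℤ, p > M ∧
      ∀ i : ℕ, i < N → x (p + i) = x (s + i))
    (N : ℕ) (v : ℕ → A) (s : ℤ)
    (hocc : ∀ i : ℕ, i < N → x (s + i) = v i)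
    (q : ℤ) (hq : 0 < q) :
    ∀ M : ℤ, ∃ p : ℤ, p > M ∧ p % q = s % q ∧
      ∀ i : ℕ, i < N → x (p + i) = v i := by
  intro M
  obtain ⟨T, hTs, hTM⟩ : ∃ T : ℤ, 0 ≤ T - s ∧ M ≤ T :=
    ⟨max M s, by simp, le_max_left _ _⟩
  -- Key construction: prefix sums P with big gaps, such that v occurs at
  -- s + (P j - P i) for all i ≤ j ≤ k.
  have key : ∀ k : ℕ, ∃ P : ℕ → ℤ, P 0 = 0 ∧
      (∀ i : ℕ, i < k → T - s < P (i + 1) - P i) ∧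
      (∀ i j : ℕ, i ≤ j → j ≤ k → ∀ n : ℕ, n < N →
        x (s + (P j - P i) + n) = v n) := by
    intro k
    induction k with
    | zero =>
      refine ⟨fun _ => 0, rfl, by omega, ?_⟩
      intro i j hij hj0 n hn
      have hj : j = 0 := Nat.le_zero.mp hj0
      have hi : i = 0 := Nat.le_zero.mp (hj ▸ hij)
      subst hj; subst hi
      simpa using hocc n hn
    | succ k ih =>
      obtain ⟨P, hP0, hgap, hoccP⟩ := ih
      have hmono : ∀ j : ℕ, j ≤ k → ∀ i : ℕ, i ≤ j → P i ≤ P j := by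
        intro j hj
        induction j with
        | zero => intro i hi; have : i = 0 := Nat.le_zero.mp hi; subst this; exact le_rfl
        | succ m ihm =>
          intro i hi
          rcases Nat.lt_or_ge i (m + 1) with h | h
          · have h1 : P i ≤ P m := ihm (by omega) i (by omega)
            have h2 : T - s < P (m + 1) - P m := hgap m (by omega)
            omega
          · have : i = m + 1 := by omega
            subst this; exact le_rfl
      have hPk : 0 ≤ P k := by
        have := hmono k le_rfl 0 (Nat.zero_le k); omega
      obtain ⟨t, htT, htocc⟩ := hrec s (N + (P k).toNat) T
      refine ⟨fun m => if m ≤ k then P m else P k + (t - s), ?_, ?_, ?_⟩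
      · simpa using hP0
      · intro i hi
        by_cases h : i < k
        · simp only [if_pos (by omega : i + 1 ≤ k), if_pos (by omega : i ≤ k)]
          exact hgap i h
        · have hik : i = k := by omega
          rw [hik]
          simp only [if_neg (by omega : ¬ (k + 1 ≤ k)), if_pos (le_refl k)]
          omega
      · intro i j hij hjk n hn
        by_cases hj : j ≤ k
        · have hi : i ≤ k := le_trans hij hj
          simp only [if_pos hj, if_pos hi]
          exact hoccP i j hij hj n hn
        · have hj' : j = k + 1 := by omega
          subst hj'
          by_cases hik : i ≤ k
          · have hPi0 : 0 ≤ P i := by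
              have := hmono i hik 0 (Nat.zero_le i); omega
            have hPi : 0 ≤ P k - P i := by
              have := hmono k le_rfl i hik; omega
            have hm : ((P k - P i).toNat + n : ℕ) < N + (P k).toNat := by
              have h1 : (P k - P i).toNat ≤ (P k).toNat :=
                Int.toNat_le_toNat (by omega)
              omega
            have e1 := htocc _ hm
            have c1 : ((((P k - P i).toNat + n : ℕ)) : ℤ) = (P k - P i) + n := by
              push_cast
              rw [Int.toNat_of_nonneg hPi]
            rw [c1] at e1
            have e2 := hoccP i k hik le_rfl n hn
            simp only [if_neg (by omega : ¬ (k + 1 ≤ k)), if_pos hik]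
            have h3 : s + (P k + (t - s) - P i) + (n : ℤ) = t + (P k - P i + n) := by ring
            rw [h3, e1]
            have h4 : s + (P k - P i + (n : ℤ)) = s + (P k - P i) + n := by ring
            rw [h4]
            exact e2
          · have : i = k + 1 := by omega
            subst this
            simp only [if_neg (by omega : ¬ (k + 1 ≤ k)), sub_self]
            simpa using hocc n hn
  obtain ⟨P, hP0, hgap, hoccP⟩ := key q.toNat
  have hqN : 1 ≤ q.toNat := by omega
  have hmono : ∀ j : ℕ, j ≤ q.toNat → ∀ i : ℕ, i ≤ j → P i ≤ P j := by
    intro j hj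
    induction j with
    | zero => intro i hi; have : i = 0 := Nat.le_zero.mp hi; subst this; exact le_rfl
    | succ m ihm =>
      intro i hi
      rcases Nat.lt_or_ge i (m + 1) with h | h
      · have h1 : P i ≤ P m := ihm (by omega) i (by omega)
        have h2 : T - s < P (m + 1) - P m := hgap m (by omega)
        omega
      · have : i = m + 1 := by omega
        subst this; exact le_rfl
  -- main: any two indices with equal residue give the result
  have main : ∀ a b : ℕ, a < b → b ≤ q.toNat → P a % q = P b % q →
      ∃ p : ℤ, p > M ∧ p % q = s % q ∧ ∀ i : ℕ, i < N → x (p + i) = v i := by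
    intro a b hab hbQ hmod
    refine ⟨s + (P b - P a), ?_, ?_, ?_⟩
    · have h1 : T - s < P (a + 1) - P a := hgap a (by omega)
      have h2 : P (a + 1) ≤ P b := hmono b hbQ (a + 1) (by omega)
      omega
    · have hdvd : q ∣ P b - P a := (Int.ModEq.dvd (hmod : Int.ModEq q (P a) (P b)))
      obtain ⟨c, hc⟩ := hdvd
      rw [hc]
      exact Int.add_mul_emod_self_left (a := s) (b := q) (c := c)
    · intro i hi
      exact hoccP a b hab.le hbQ i hi
  -- pigeonhole on residues mod q among P 0, ..., P q.toNat
  have hpig : ∃ a ∈ Finset.range (q.toNat + 1), ∃ b ∈ Finset.range (q.toNat + 1),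
      a ≠ b ∧ (P a % q).toNat = (P b % q).toNat := by
    apply Finset.exists_ne_map_eq_of_card_lt_of_maps_to (t := Finset.range q.toNat)
    · simp
    · intro a _
      have h1 : 0 ≤ P a % q := Int.emod_nonneg _ (by omega)
      have h2 : P a % q < q := Int.emod_lt_of_pos _ hq
      simp only [Finset.mem_coe, Finset.mem_range]
      omega
  obtain ⟨a, ha, b, hb, hne, heq⟩ := hpig
  simp only [Finset.mem_range] at ha hb
  have hres : P a % q = P b % q := by
    have h1 : 0 ≤ P a % q := Int.emod_nonneg _ (by omega)
    have h2 : 0 ≤ P b % q := Int.emod_nonneg _ (by omega)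
    omega
  rcases lt_or_gt_of_ne hne with h | h
  · exact main a b h (by omega) hres
  · exact main b a h (by omega) hres.symm
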